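/- If z and z' are points of the square S of side 1 centered at 0 with |z−z'| ≤ 1/2, then the intersection of S with the disk Γ of center z and radius |z−z'| contains one of the four closed quarter-disks of Γ (a quarter disk determined by the two coordinate axes through z). -/

import Mathlib

/-- The open unit square centered at 0 in ℂ. -/
def unitSquare : Set ℂ := {z : ℂ | |z.re| < 1/2 ∧ |z.im| < 1/2}

/-- If `z, z'` lie in the unit square with `|z - z'| ≤ 1/2`, then `S ∩ Γ`, where
`Γ` is the disk of center `z` and radius `|z - z'|`, contains one of the four closed
quarter-disks of `Γ` determined by the two coordinate axes through `z`. -/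
theorem square_contains_quarter_disk (z z' : ℂ) (hz : z ∈ unitSquare)
    (hz' : z' ∈ unitSquare) (h : ‖z - z'‖ ≤ 1/2) :
    ∃ ε₁ ε₂ : ℝ, (ε₁ = 1 ∨ ε₁ = -1) ∧ (ε₂ = 1 ∨ ε₂ = -1) ∧
      {w : ℂ | w ∈ Metric.ball z (‖z - z'‖) ∧
          0 ≤ ε₁ * (w - z).re ∧ 0 ≤ ε₂ * (w - z).im} ⊆
        Metric.ball z (‖z - z'‖) ∩ unitSquare := by
  obtain ⟨hzre, hzim⟩ := hz
  rw [abs_lt] at hzre hzim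
  refine ⟨if 0 ≤ z.re then -1 else 1, if 0 ≤ z.im then -1 else 1, ?_, ?_, ?_⟩
  · split_ifs <;> simp
  · split_ifs <;> simp
  rintro w ⟨hb, h1, h2⟩
  refine ⟨hb, ?_, ?_⟩ <;>
  · have hwz : ‖w - z‖ < ‖z - z'‖ := by
      rwa [Metric.mem_ball, Complex.dist_eq] at hb
    have hre : |(w - z).re| < 1/2 :=
      lt_of_le_of_lt (Complex.abs_re_le_norm _) (lt_of_lt_of_le hwz h)
    have him : |(w - z).im| < 1/2 :=
      lt_of_le_of_lt (Complex.abs_im_le_norm _) (lt_of_lt_of_le hwz h)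
    rw [abs_lt] at hre him
    simp only [Complex.sub_re, Complex.sub_im] at hre him h1 h2
    rw [abs_lt]
    constructor <;> split_ifs at h1 h2 <;> linarith
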